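/- If V' ⊆ V are F_q-subspaces of F_{q^s} with V = V' ⊕ F_q·a, and f'(x) = Π_{β∈V'}(x-β), then Π_{β∈V}(x-β) = (x^q - (f'(a))^{q-1} x) ∘ f', where ∘ denotes composition of polynomials. -/
import Mathlib

open Polynomial

/-- A monic polynomial of degree `card ι` with `card ι` distinct roots equals the
product of the corresponding linear factors. -/
lemma monic_eq_prod_of_roots {K : Type*} [Field K] {ι : Type*} [Fintype ι]
    (p : K[X]) (hp : p.Monic) {r : ι → K} (hr : Function.Injective r)
    (hdeg : p.natDegree = Fintype.card ι) (hroot : ∀ i, p.eval (r i) = 0) :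
    p = ∏ i, (X - C (r i)) := by
  set Q : K[X] := ∏ i, (X - C (r i)) with hQ
  have hQm : Q.Monic := monic_prod_of_monic _ _ fun i _ => monic_X_sub_C (r i)
  have hQdeg : Q.natDegree = Fintype.card ι := by
    rw [hQ, natDegree_prod_of_monic _ _ fun i _ => monic_X_sub_C (r i)]
    simp
  have hsub : p - Q = 0 := by
    by_contra hne
    have hdlt : (p - Q).natDegree < Fintype.card ι := by
      have h1 : (p - Q).degree < p.degree :=
        degree_sub_lt (by rw [degree_eq_natDegree hp.ne_zero, degree_eq_natDegree hQm.ne_zero, hdeg, hQdeg])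
          hp.ne_zero (by rw [hp.leadingCoeff, hQm.leadingCoeff])
      have h2 : (p - Q).degree < (Fintype.card ι : ℕ) := by
        rwa [degree_eq_natDegree hp.ne_zero, hdeg] at h1
      exact natDegree_lt_iff_degree_lt hne |>.2 h2
    have : p - Q = 0 := by
      refine eq_zero_of_natDegree_lt_card_of_eval_eq_zero _ hr (fun i => ?_) hdlt
      have hQr : Q.eval (r i) = 0 := by
        rw [hQ, eval_prod]
        exact Finset.prod_eq_zero (Finset.mem_univ i) (by simp)
      simp [eval_sub, hroot i, hQr]
    exact hne this
  exact sub_eq_zero.mp hsub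

/-- If `V' ⊆ V` are `F_q`-subspaces of `F_{q^s}` with `V = V' ⊕ F_q·a` (where
`a ∉ V'`), and `f' = ∏_{β ∈ V'} (x - β)`, then
`∏_{β ∈ V} (x - β) = (x^q - (f'(a))^{q-1} x) ∘ f'`. -/
theorem subspace_prod_step
    (Fq K : Type*) [Field Fq] [Fintype Fq] [Field K] [Fintype K] [Algebra Fq K]
    (q : ℕ) (hq : Fintype.card Fq = q)
    (V' V : Submodule Fq K) [Fintype V'] [Fintype V]
    (a : K) (ha : a ∉ V') (hV : V = V' ⊔ Submodule.span Fq {a}) :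
    ∏ β : V, (X - C (β : K)) =
      (X ^ q - C (((∏ β : V', (X - C (β : K))).eval a) ^ (q - 1)) * X).comp
        (∏ β : V', (X - C (β : K))) := by
  classical
  set f' : K[X] := ∏ β : V', (X - C (β : K)) with hf'
  set t : K := f'.eval a with htdef
  set N : ℕ := Fintype.card V' with hN
  have hq2 : 2 ≤ q := hq ▸ Fintype.one_lt_card
  have hq0 : q ≠ 0 := by omega
  -- basic facts about f'
  have hf'monic : f'.Monic := monic_prod_of_monic _ _ fun β _ => monic_X_sub_C _
  have hf'deg : f'.natDegree = N := by
    rw [hf', natDegree_prod_of_monic _ _ fun β _ => monic_X_sub_C _]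
    simp [hN]
  have heval : ∀ c : K, f'.eval c = ∏ β : V', (c - (β : K)) := by
    intro c; rw [hf', eval_prod]; simp
  have ht : t ≠ 0 := by
    rw [htdef, heval]
    exact Finset.prod_ne_zero_iff.mpr fun β _ => sub_ne_zero.mpr
      (fun h => ha (h ▸ β.2))
  -- N is a power of q
  have hNpow : N = q ^ Module.finrank Fq V' := by
    rw [hN, Module.card_eq_pow_finrank (K := Fq), hq]
  -- linearity at points of V' + Fq a
  have hlin : ∀ (α : Fq) (b : K), b ∈ V' →
      f'.eval (algebraMap Fq K α * a + b) = algebraMap Fq K α * t := by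
    intro α b hb
    have h1 : f'.eval (algebraMap Fq K α * a + b) = f'.eval (algebraMap Fq K α * a) := by
      rw [heval, heval]
      refine Fintype.prod_equiv (Equiv.subRight (⟨b, hb⟩ : V'))
        (fun β => algebraMap Fq K α * a + b - (β : K))
        (fun β => algebraMap Fq K α * a - (β : K)) (fun β => ?_)
      rw [Equiv.subRight_apply]
      push_cast
      ring
    rw [h1]
    rcases eq_or_ne α 0 with rfl | hα
    · simp only [map_zero, zero_mul]
      rw [heval]
      exact Finset.prod_eq_zero (Finset.mem_univ (⟨0, V'.zero_mem⟩ : V')) (by simp)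
    · have hu : algebraMap Fq K α ≠ 0 := by
        simpa using (algebraMap Fq K).injective.ne hα
      have hbij : Function.Bijective (fun β : V' => α • β) := by
        refine Finite.injective_iff_bijective.mp fun x y hxy => ?_
        have := congrArg (fun z : V' => α⁻¹ • z) hxy
        simpa [smul_smul, inv_mul_cancel₀ hα] using this
      rw [heval]
      calc ∏ β : V', (algebraMap Fq K α * a - (β : K))
          = ∏ β : V', (algebraMap Fq K α * a - ((α • β : V') : K)) :=
            (Fintype.prod_bijective _ hbij _ _ (fun β => rfl)).symm
        _ = ∏ β : V', algebraMap Fq K α * (a - (β : K)) := by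
            refine Finset.prod_congr rfl fun β _ => ?_
            push_cast
            rw [Algebra.smul_def]; ring
        _ = (algebraMap Fq K α) ^ N * ∏ β : V', (a - (β : K)) := by
            rw [Finset.prod_mul_distrib, Finset.prod_const, hN, Finset.card_univ]
        _ = algebraMap Fq K α * t := by
            have h6 : α ^ q ^ Module.finrank Fq V' = α := by
              rw [← hq]; exact FiniteField.pow_card_pow _ α
            rw [hNpow, ← map_pow, h6, htdef, heval]
  -- each translate product
  have hPα : ∀ α : Fq, f' - C (algebraMap Fq K α * t) =
      ∏ b : V', (X - C (algebraMap Fq K α * a + (b : K))) := by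
    intro α
    have hN1 : 0 < N := Fintype.card_pos
    refine monic_eq_prod_of_roots _ ?_ ?_ (by rw [natDegree_sub_C, hf'deg]) ?_
    · have : (-(C (algebraMap Fq K α * t))).degree < f'.degree := by
        have h0 : (-(C (algebraMap Fq K α * t))).degree ≤ 0 := by
          rw [degree_neg]; exact degree_C_le
        refine lt_of_le_of_lt h0 ?_
        rw [degree_eq_natDegree hf'monic.ne_zero, hf'deg]
        exact_mod_cast hN1
      simpa [sub_eq_add_neg] using hf'monic.add_of_left this
    · intro x y hxy
      have : (x : K) = y := by
        have := add_left_cancel hxy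
        exact this
      exact Subtype.ext this
    · intro b
      simp [eval_sub, hlin α b b.2]
  -- the Fq-product polynomial
  have hg : (X : K[X]) ^ q - C (t ^ (q - 1)) * X =
      ∏ α : Fq, (X - C (algebraMap Fq K α * t)) := by
    refine monic_eq_prod_of_roots _ ?_ ?_ ?_ ?_
    · have : (-(C (t ^ (q-1)) * X)).degree < ((X : K[X]) ^ q).degree := by
        rw [degree_neg, degree_X_pow]
        refine lt_of_le_of_lt (degree_C_mul_X_le _) ?_
        exact_mod_cast by omega
      simpa [sub_eq_add_neg, neg_mul] using (monic_X_pow q).add_of_left this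
    · intro x y hxy
      exact (algebraMap Fq K).injective (mul_right_cancel₀ ht hxy)
    · have hdlt : (C (t ^ (q - 1)) * X).degree < ((X : K[X]) ^ q).degree := by
        rw [degree_X_pow]
        refine lt_of_le_of_lt (degree_C_mul_X_le _) ?_
        exact_mod_cast by omega
      rw [natDegree_eq_of_degree_eq (degree_sub_eq_left_of_degree_lt hdlt),
        natDegree_X_pow, hq]
    · intro α
      have hαq : (algebraMap Fq K α) ^ q = algebraMap Fq K α := by
        have h5 : α ^ q = α := by rw [← hq]; exact FiniteField.pow_card α
        rw [← map_pow, h5]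
      simp only [eval_sub, eval_mul, eval_pow, eval_X, eval_C]
      rw [mul_pow, hαq]
      have : t ^ (q - 1) * (algebraMap Fq K α * t) = algebraMap Fq K α * t ^ q := by
        rw [← pow_sub_one_mul hq0 t]; ring
      rw [this]; ring
  -- reindex V
  have hmem : ∀ (α : Fq) (b : V'), algebraMap Fq K α * a + (b : K) ∈ V := by
    intro α b
    rw [hV]
    refine Submodule.add_mem _ (Submodule.mem_sup_right ?_) (Submodule.mem_sup_left b.2)
    rw [← Algebra.smul_def]
    exact Submodule.smul_mem _ _ (Submodule.mem_span_singleton_self a)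
  have hbijV : Function.Bijective
      (fun p : Fq × V' => (⟨algebraMap Fq K p.1 * a + (p.2 : K), hmem p.1 p.2⟩ : V)) := by
    constructor
    · rintro ⟨α, b⟩ ⟨α', b'⟩ h
      have h' : algebraMap Fq K α * a + (b : K) = algebraMap Fq K α' * a + (b' : K) :=
        congrArg Subtype.val h
      have hαα : α = α' := by
        by_contra hne
        have hsub : (algebraMap Fq K (α - α')) * a = (b' : K) - (b : K) := by
          rw [map_sub]; linear_combination h'
        have : a ∈ V' := by
          have hmem2 : (algebraMap Fq K (α - α')) * a ∈ V' := by
            rw [hsub]; exact V'.sub_mem b'.2 b.2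
          have h3 : a = (α - α')⁻¹ • ((algebraMap Fq K (α - α')) * a) := by
            rw [Algebra.smul_def, ← mul_assoc, ← map_mul,
              inv_mul_cancel₀ (sub_ne_zero.mpr hne), map_one, one_mul]
          rw [h3]
          exact V'.smul_mem _ hmem2
        exact ha this
      subst hαα
      have : (b : K) = b' := by
        have := add_left_cancel h'
        exact this
      exact Prod.ext rfl (Subtype.ext this)
    · rintro ⟨v, hv⟩
      rw [hV] at hv
      obtain ⟨y, hy, z, hz, hyz⟩ := Submodule.mem_sup.mp hv
      obtain ⟨α, rfl⟩ := Submodule.mem_span_singleton.mp hz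
      refine ⟨(α, ⟨y, hy⟩), ?_⟩
      apply Subtype.ext
      simp only
      rw [← Algebra.smul_def] at *
      rw [← hyz]; ring
  rw [hg, prod_comp]
  have hstep : ∏ β : V, (X - C (β : K)) = ∏ α : Fq, (f' - C (algebraMap Fq K α * t)) := by
    calc ∏ β : V, (X - C (β : K))
        = ∏ p : Fq × V', (X - C (algebraMap Fq K p.1 * a + (p.2 : K))) :=
          (Fintype.prod_bijective _ hbijV _ _ (fun p => rfl)).symm
      _ = ∏ α : Fq, ∏ b : V', (X - C (algebraMap Fq K α * a + (b : K))) :=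
          Fintype.prod_prod_type _
      _ = ∏ α : Fq, (f' - C (algebraMap Fq K α * t)) :=
          Finset.prod_congr rfl fun α _ => (hPα α).symm
  rw [hstep]
  exact Finset.prod_congr rfl fun α _ => by simp
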